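/- Let k be an algebraically closed field of characteristic 2 and let q_1, q_2 ∈ k[X_0,…,X_5] be homogeneous polynomials of degree 2. Call a nonzero vector v ∈ k^6 a singular point of the intersection Q_1 ∩ Q_2 if q_1(v) = q_2(v) = 0 and the 2×6 Jacobian matrix ((∂q_i/∂X_j)(v)) has rank at most 1. If Q_1 ∩ Q_2 has no singular point, then there is no 3-dimensional linear subspace W ⊆ k^6 on which both q_1 and q_2 vanish identically (i.e., the nonsingular intersection of two quadrics in P^5 contains no plane). -/

import Mathlib

open MvPolynomial Module

section aux
variable {k : Type*} [Field k]

lemma deg2_decomp (d : Fin 6 →₀ ℕ) (hd : (Finsupp.weight 1) d = 2) :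
    ∃ a b : Fin 6, d = Finsupp.single a 1 + Finsupp.single b 1 := by
  classical
  have hcard : Multiset.card (Finsupp.toMultiset d) = 2 := by
    rw [Finsupp.card_toMultiset, ← hd]
    simp [Finsupp.weight_apply, Finsupp.sum]
  obtain ⟨a, b, hab⟩ := Multiset.card_eq_two.mp hcard
  refine ⟨a, b, ?_⟩
  have := Finsupp.toMultiset_toFinsupp d
  rw [hab] at this
  rw [← this, Multiset.insert_eq_cons, ← Multiset.singleton_add, map_add,
    Multiset.toFinsupp_singleton, Multiset.toFinsupp_singleton]

lemma polar_eq (q : MvPolynomial (Fin 6) k) (h : q.IsHomogeneous 2) (v w : Fin 6 → k) :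
    eval (v + w) q = eval v q + eval w q + ∑ j, w j * eval v (pderiv j q) := by
  have main : ∀ p : MvPolynomial (Fin 6) k,
      (∀ d ∈ p.support, ∃ a b : Fin 6, d = Finsupp.single a 1 + Finsupp.single b 1) →
      eval (v + w) p = eval v p + eval w p + ∑ j, w j * eval v (pderiv j p) := by
    intro p hp
    rw [p.as_sum]
    refine Finset.sum_induction _ (fun r => eval (v + w) r = eval v r + eval w r
      + ∑ j, w j * eval v (pderiv j r)) ?_ ?_ ?_
    · intro r s hr hs
      simp only [map_add, hr, hs, mul_add, Finset.sum_add_distrib]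
      ring
    · simp
    · intro d hd
      obtain ⟨a, b, hab⟩ := hp d hd
      have hm : (monomial d (coeff d p))
          = C (coeff d p) * X a * X b := by
        rw [hab, monomial_add_single, pow_one, ← C_mul_X_eq_monomial]
      rw [hm]
      classical
      simp only [eval_mul, eval_C, eval_X, Pi.add_apply, pderiv_mul, pderiv_X, pderiv_C,
        Pi.single_apply, apply_ite (eval v), map_one, map_zero,
        map_add, map_mul, eval_C, eval_X, zero_mul, mul_zero, zero_add, add_zero,
        mul_ite, ite_mul, mul_one, one_mul, mul_add, Finset.sum_add_distrib,
        Finset.sum_ite_eq', Finset.sum_ite_eq, Finset.mem_univ, if_true]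
      ring
  exact main q fun d hd => deg2_decomp d (h (mem_support_iff.mp hd))

lemma grad_eq (q : MvPolynomial (Fin 6) k) (h : q.IsHomogeneous 2) (v : Fin 6 → k) (j : Fin 6) :
    eval v (pderiv j q) = ∑ i, v i * eval (Pi.single j 1 : Fin 6 → k) (pderiv i q) := by
  classical
  have h1 := polar_eq q h v (Pi.single j 1)
  have h2 := polar_eq q h (Pi.single j 1) v
  rw [add_comm v (Pi.single j 1)] at h1
  rw [h1] at h2
  simp only [Pi.single_apply, ite_mul, one_mul, zero_mul, Finset.sum_ite_eq,
    Finset.sum_ite_eq', Finset.mem_univ, if_true] at h2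
  linear_combination h2

/-- The standard dot-product bilinear form on `Fin 6 → k`. -/
noncomputable def dotB : LinearMap.BilinForm k (Fin 6 → k) :=
  LinearMap.mk₂ k (fun x y => ∑ j, x j * y j)
    (fun x x' y => by simp [add_mul, Finset.sum_add_distrib])
    (fun c x y => by simp [Finset.mul_sum, mul_assoc])
    (fun x y y' => by simp [mul_add, Finset.sum_add_distrib])
    (fun c x y => by simp [Finset.mul_sum]; exact Finset.sum_congr rfl fun i _ => by ring)

lemma dotB_apply (x y : Fin 6 → k) : dotB x y = ∑ j, x j * y j := rfl

lemma dotB_refl : (dotB (k := k)).IsRefl := by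
  intro x y hxy
  rw [dotB_apply] at hxy ⊢
  rw [← hxy]
  exact Finset.sum_congr rfl fun i _ => mul_comm _ _

lemma dotB_nondeg : (dotB (k := k)).Nondegenerate := by
  refine ⟨fun x hx => ?_, fun x hx => ?_⟩
  · funext j
    have := hx (Pi.single j 1)
    classical
    simpa [dotB_apply, Pi.single_apply, mul_ite, Finset.sum_ite_eq', Finset.sum_ite_eq]
      using this
  · funext j
    have := hx (Pi.single j 1)
    classical
    simpa [dotB_apply, Pi.single_apply, mul_ite, Finset.sum_ite_eq', Finset.sum_ite_eq]
      using this

lemma rank_le_one_of_dep (M : Matrix (Fin 2) (Fin 6) k) (lam mu : k)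
    (hne : lam ≠ 0 ∨ mu ≠ 0) (hrow : ∀ j, lam * M 0 j + mu * M 1 j = 0) :
    M.rank ≤ 1 := by
  classical
  set φ : (Fin 2 → k) →ₗ[k] k := lam • LinearMap.proj 0 + mu • LinearMap.proj 1 with hφ
  have hφ_apply : ∀ x : Fin 2 → k, φ x = lam * x 0 + mu * x 1 := fun x => rfl
  have hrange : LinearMap.range M.mulVecLin ≤ LinearMap.ker φ := by
    rintro x ⟨u, rfl⟩
    simp only [LinearMap.mem_ker, hφ_apply, Matrix.mulVecLin_apply, Matrix.mulVec,
      dotProduct, Finset.mul_sum, ← Finset.sum_add_distrib]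
    rw [show (0 : k) = ∑ j : Fin 6, 0 by simp]
    refine Finset.sum_congr rfl fun j _ => ?_
    linear_combination u j * hrow j
  have hker : finrank k (LinearMap.ker φ) ≤ 1 := by
    have hrn := LinearMap.finrank_range_add_finrank_ker φ
    rw [Module.finrank_fin_fun] at hrn
    have hr1 : finrank k (LinearMap.range φ) ≠ 0 := by
      intro h0
      have hbot : LinearMap.range φ = ⊥ := Submodule.finrank_eq_zero.mp h0
      rw [LinearMap.range_eq_bot] at hbot
      rcases hne with h | h
      · have : φ (Pi.single 0 1) = 0 := by rw [hbot]; rfl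
        simp [hφ_apply, Pi.single_apply] at this
        exact h this
      · have : φ (Pi.single 1 1) = 0 := by rw [hbot]; rfl
        simp [hφ_apply, Pi.single_apply] at this
        exact h this
    omega
  calc M.rank = finrank k (LinearMap.range M.mulVecLin) := rfl
    _ ≤ finrank k (LinearMap.ker φ) := Submodule.finrank_mono hrange
    _ ≤ 1 := hker

/-- Pencil lemma: for two linear maps between spaces of equal finite dimension over an
algebraically closed field, some nonzero member of the pencil has nontrivial kernel. -/
lemma pencil_lemma {V U : Type*} [IsAlgClosed k] [AddCommGroup V] [Module k V]
    [AddCommGroup U] [Module k U] [FiniteDimensional k V] [FiniteDimensional k U]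
    [Nontrivial V] (hdim : finrank k U = finrank k V) (A B : V →ₗ[k] U) :
    ∃ (lam mu : k) (x : V), x ≠ 0 ∧ (lam ≠ 0 ∨ mu ≠ 0) ∧
      lam • A x + mu • B x = 0 := by
  obtain ⟨ψ⟩ : Nonempty (U ≃ₗ[k] V) := ⟨LinearEquiv.ofFinrankEq _ _ hdim⟩
  set A' : V →ₗ[k] V := ψ.toLinearMap.comp A with hA'
  set B' : V →ₗ[k] V := ψ.toLinearMap.comp B with hB'
  by_cases hinj : Function.Injective B'
  · have hsurj : Function.Surjective B' :=
      (LinearMap.injective_iff_surjective_of_finrank_eq_finrank rfl).mp hinj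
    let eB : V ≃ₗ[k] V := LinearEquiv.ofBijective B' ⟨hinj, hsurj⟩
    obtain ⟨t, ht⟩ := Module.End.exists_eigenvalue (eB.symm.toLinearMap.comp A')
    obtain ⟨x, hx⟩ := ht.exists_hasEigenvector
    refine ⟨1, -t, x, hx.2, Or.inl one_ne_zero, ?_⟩
    have hEx : eB.symm (A' x) = t • x := hx.apply_eq_smul
    have h2 : A' x = B' (t • x) := by
      have := congrArg eB hEx
      rw [LinearEquiv.apply_symm_apply, map_smul] at this
      rw [map_smul]
      exact this
    rw [map_smul] at h2
    have hAB : A x = t • B x := by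
      apply ψ.injective
      rw [hA', hB'] at h2
      simpa [map_smul] using h2
    rw [hAB, one_smul, ← add_smul]
    simp
  · rw [← LinearMap.ker_eq_bot] at hinj
    obtain ⟨x, hxk, hx0⟩ := Submodule.exists_mem_ne_zero_of_ne_bot hinj
    refine ⟨0, 1, x, hx0, Or.inr one_ne_zero, ?_⟩
    have hBx : B x = 0 := by
      apply ψ.injective
      have : B' x = 0 := hxk
      rw [hB'] at this
      simpa using this
    rw [hBx]
    simp

end aux

/-- a nonsingular intersection of two quadrics in P^5
(characteristic 2) contains no plane. -/
theorem stmt_3 (k : Type*) [Field k] [IsAlgClosed k] [CharP k 2]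
    (q1 q2 : MvPolynomial (Fin 6) k)
    (h1 : q1.IsHomogeneous 2) (h2 : q2.IsHomogeneous 2)
    (hns : ¬ ∃ v : Fin 6 → k, v ≠ 0 ∧ eval v q1 = 0 ∧ eval v q2 = 0 ∧
      (Matrix.of fun (i : Fin 2) (j : Fin 6) =>
        eval v (pderiv j (![q1, q2] i))).rank ≤ 1) :
    ¬ ∃ W : Submodule k (Fin 6 → k), Module.finrank k W = 3 ∧
      ∀ v ∈ W, eval v q1 = 0 ∧ eval v q2 = 0 := by
  classical
  rintro ⟨W, hW3, hWvan⟩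
  set G1 : (Fin 6 → k) →ₗ[k] (Fin 6 → k) :=
    (Matrix.of fun j i => eval (Pi.single j 1 : Fin 6 → k) (pderiv i q1)).mulVecLin with hG1def
  set G2 : (Fin 6 → k) →ₗ[k] (Fin 6 → k) :=
    (Matrix.of fun j i => eval (Pi.single j 1 : Fin 6 → k) (pderiv i q2)).mulVecLin with hG2def
  have hG1 : ∀ v : Fin 6 → k, G1 v = fun j => eval v (pderiv j q1) := by
    intro v; funext j
    rw [hG1def]
    simp only [Matrix.mulVecLin_apply, Matrix.mulVec, dotProduct, Matrix.of_apply]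
    rw [grad_eq q1 h1 v j]
    exact Finset.sum_congr rfl fun i _ => mul_comm _ _
  have hG2 : ∀ v : Fin 6 → k, G2 v = fun j => eval v (pderiv j q2) := by
    intro v; funext j
    rw [hG2def]
    simp only [Matrix.mulVecLin_apply, Matrix.mulVec, dotProduct, Matrix.of_apply]
    rw [grad_eq q2 h2 v j]
    exact Finset.sum_congr rfl fun i _ => mul_comm _ _
  set U : Submodule k (Fin 6 → k) := (dotB (k := k)).orthogonal W with hUdef
  have hUrank : finrank k U = 3 := by
    rw [hUdef, LinearMap.BilinForm.finrank_orthogonal dotB_nondeg W,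
      Module.finrank_fin_fun, hW3]
  have hmemU : ∀ (q : MvPolynomial (Fin 6) k), q.IsHomogeneous 2 →
      (∀ v ∈ W, eval v q = 0) → ∀ x ∈ W, (fun j => eval x (pderiv j q)) ∈ U := by
    intro q hq hvan x hx
    rw [hUdef, LinearMap.BilinForm.mem_orthogonal_iff]
    intro w hw
    show dotB w _ = 0
    rw [dotB_apply]
    have hp := polar_eq q hq x w
    rw [hvan x hx, hvan w hw, hvan (x + w) (W.add_mem hx hw), zero_add, zero_add] at hp
    simpa using hp.symm
  set A : W →ₗ[k] U := LinearMap.codRestrict U (G1.comp W.subtype)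
    (fun x => by
      rw [LinearMap.comp_apply, Submodule.subtype_apply, hG1]
      exact hmemU q1 h1 (fun v hv => (hWvan v hv).1) x x.2) with hAdef
  set B : W →ₗ[k] U := LinearMap.codRestrict U (G2.comp W.subtype)
    (fun x => by
      rw [LinearMap.comp_apply, Submodule.subtype_apply, hG2]
      exact hmemU q2 h2 (fun v hv => (hWvan v hv).2) x x.2) with hBdef
  have hAcoe : ∀ x : W, (A x : Fin 6 → k) = fun j => eval (x : Fin 6 → k) (pderiv j q1) := by
    intro x; rw [hAdef]
    simp only [LinearMap.codRestrict_apply, LinearMap.comp_apply, Submodule.subtype_apply]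
    rw [hG1]
  have hBcoe : ∀ x : W, (B x : Fin 6 → k) = fun j => eval (x : Fin 6 → k) (pderiv j q2) := by
    intro x; rw [hBdef]
    simp only [LinearMap.codRestrict_apply, LinearMap.comp_apply, Submodule.subtype_apply]
    rw [hG2]
  have hnont : Nontrivial W := Module.nontrivial_of_finrank_pos (by rw [hW3]; norm_num)
  obtain ⟨lam, mu, x, hx0, hne, heq⟩ := pencil_lemma (by rw [hUrank, hW3]) A B
  apply hns
  refine ⟨(x : Fin 6 → k), by simpa using hx0, (hWvan _ x.2).1, (hWvan _ x.2).2, ?_⟩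
  apply rank_le_one_of_dep _ lam mu hne
  intro j
  have hcoe : lam • (A x : Fin 6 → k) + mu • (B x : Fin 6 → k) = 0 := by
    have := congrArg (Submodule.subtype U) heq
    simpa using this
  have := congrFun hcoe j
  rw [hAcoe, hBcoe] at this
  simpa [Matrix.of_apply, smul_eq_mul] using this
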